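/- An oriented subgraph T of a map G on an orientable surface is partitionable if and only if it is a topological Tutte-orientation, i.e. β(T,W) ≡ 0 (mod 3) for every closed walk W of the dual map G*. -/

import Mathlib

/-
Common combinatorial framework.

Maps on compact orientable surfaces are formalized as rotation systems
(combinatorial maps): a finite set of darts together with a permutation `σ`
(counterclockwise successor around each vertex) and a fixed-point-free
involution `α` (reversal of darts).  Vertices are the orbits of `σ`, edges the
orbits of `α`, and the (counterclockwise) facial walks are the orbits of
`σ⁻¹ * α`.  The genus is recovered from the Euler characteristic.

Homology of the map is formalized by flows: integer-valued functions on darts;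
the subgroup generated by the facial flows plays the role of the boundary
subgroup, two flows being homologous when their difference belongs to it.
Contractibility is formalized combinatorially: null-homotopy of closed walks is
generated by insertion/deletion of spurs and of facial boundaries (and rotation
of the base point).

Schnyder woods are formalized by their angle labellings (corners ≃ darts, the
corner of dart `d` being the corner between `d` and `σ d` at the tail of `d`);
this follows the paper, where (generalized) Schnyder woods are exactly the
EDGE, ℕ*-VERTEX, ℕ*-FACE angle labellings, and where around an edge `{d, α d}`
the four corners in clockwise order are `d, σ⁻¹ (α d), α d, σ⁻¹ d`.
-/

noncomputable section
open scoped Classical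

namespace Schnyder

/-- The setoid whose classes are the orbits (cycles) of a permutation;
for the vertex rotation `σ` the classes are the vertices of the map, for the
edge involution `α` they are the edges, for the face permutation they are the
faces. -/
def permSetoid {X : Type*} (f : Equiv.Perm X) : Setoid X where
  r := f.SameCycle
  iseqv := ⟨fun x => ⟨0, by simp⟩, fun h => h.symm, fun h h' => h.trans h'⟩

/-- The number of orbits of a permutation. -/
def numOrbits {X : Type*} (f : Equiv.Perm X) : ℕ :=
  Nat.card (Quotient (permSetoid f))

/-- `ccwSector σ x y d` : rotating counterclockwise (iterating `σ`) from the dart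
`x`, the dart `d` is met strictly after `x` and before the first occurrence of
`y`; i.e. `d` lies in the counterclockwise sector from `x` to `y` (both
excluded). -/
def ccwSector {X : Type*} (σ : Equiv.Perm X) (x y d : X) : Prop :=
  ∃ k : ℕ, 0 < k ∧ (σ ^ k) x = d ∧ ∀ l : ℕ, 0 < l → l ≤ k → (σ ^ l) x ≠ y

def cyclicNext {n : ℕ} (h : 0 < n) (k : Fin n) : Fin n :=
  ⟨((k : ℕ) + 1) % n, Nat.mod_lt _ h⟩

def cyclicPrev {n : ℕ} (h : 0 < n) (k : Fin n) : Fin n :=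
  ⟨((k : ℕ) + (n - 1)) % n, Nat.mod_lt _ h⟩

/-- The face permutation: its orbits are the (counterclockwise) facial walks of
the map with vertex rotation `σ` and edge involution `α`. -/
def fperm {X : Type*} (σ α : Equiv.Perm X) : Equiv.Perm X := σ⁻¹ * α

/-- A closed walk in the map with vertex rotation `σ` and edge involution `α`:
a cyclic sequence of darts, consecutive darts being chained head-to-tail. -/
structure CWalk {X : Type*} (σ α : Equiv.Perm X) where
  n : ℕ
  pos : 0 < n
  darts : Fin n → X
  chain : ∀ k : Fin n, σ.SameCycle (α (darts k)) (darts (cyclicNext pos k))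

namespace CWalk

variable {X : Type*} {σ α : Equiv.Perm X}

/-- The characteristic flow of a closed walk. -/
def flow (W : CWalk σ α) : X → ℤ := fun d =>
  ∑ k : Fin W.n, ((if W.darts k = d then (1 : ℤ) else 0) - (if W.darts k = α d then 1 else 0))

/-- A closed walk is a cycle when it passes at most once through each vertex. -/
def IsCycle (W : CWalk σ α) : Prop :=
  ∀ k k' : Fin W.n, σ.SameCycle (W.darts k) (W.darts k') → k = k'

def Mem (W : CWalk σ α) (d : X) : Prop := ∃ k, W.darts k = d

/-- Two closed walks intersect when they share a vertex. -/
def Intersects (W W' : CWalk σ α) : Prop :=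
  ∃ k k', σ.SameCycle (W.darts k) (W'.darts k')

/-- `W'` is obtained from `W` by reversing all its edges. -/
def IsReversal (W W' : CWalk σ α) : Prop := ∀ d, W.Mem d ↔ W'.Mem (α d)

/-- Two closed walks use exactly the same darts. -/
def SameSupport (W W' : CWalk σ α) : Prop := ∀ d, W.Mem d ↔ W'.Mem d

/-- Edge-disjointness of two closed walks. -/
def EdgeDisjoint (W W' : CWalk σ α) : Prop :=
  ∀ d, W.Mem d → ¬ W'.Mem d ∧ ¬ W'.Mem (α d)

/-- The list of darts of a closed walk. -/
def toList (W : CWalk σ α) : List X := List.ofFn W.darts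

end CWalk

/-- Two (monochromatic) cycles cross when they intersect and are not reversal
of each other. -/
def CrossingCycles {X : Type*} {σ α : Equiv.Perm X} (W W' : CWalk σ α) : Prop :=
  W.Intersects W' ∧ ¬ W.IsReversal W'

/-- The characteristic flow of the counterclockwise facial walk of the face of
the dart `d0`. -/
def faceFlow {X : Type*} (σ α : Equiv.Perm X) (d0 : X) : X → ℤ := fun d =>
  (if (fperm σ α).SameCycle d0 d then (1 : ℤ) else 0)
    - (if (fperm σ α).SameCycle d0 (α d) then 1 else 0)

/-- The subgroup `𝔽` of flows generated by the (counterclockwise) facial walks. -/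
def facialSubgroup {X : Type*} (σ α : Equiv.Perm X) : AddSubgroup (X → ℤ) :=
  AddSubgroup.closure (Set.range (faceFlow σ α))

/-- Two flows are homologous when their difference belongs to `𝔽`. -/
def Homologous {X : Type*} (σ α : Equiv.Perm X) (f g : X → ℤ) : Prop :=
  f - g ∈ facialSubgroup σ α

/-- Two flows are reversely homologous when their sum belongs to `𝔽`. -/
def ReverselyHomologous {X : Type*} (σ α : Equiv.Perm X) (f g : X → ℤ) : Prop :=
  f + g ∈ facialSubgroup σ α

/-- Two flows are weakly homologous when they are homologous or reversely
homologous. -/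
def WeaklyHomologous {X : Type*} (σ α : Equiv.Perm X) (f g : X → ℤ) : Prop :=
  Homologous σ α f g ∨ ReverselyHomologous σ α f g

/-- Antisymmetric dart functions: the flows `ℤ^E` of the paper (with respect to
the reference orientation given by the darts). -/
def IsFlow {X : Type*} (α : Equiv.Perm X) (f : X → ℤ) : Prop := ∀ d, f (α d) = - f d

/-- A finite family of closed walks is a homology-basis when its classes
generate the first homology group: every closed walk equals, modulo the facial
subgroup, an integer combination of the family. -/
def IsHomologyBasis {X : Type*} (σ α : Equiv.Perm X) {ι : Type*} [Fintype ι]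
    (B : ι → CWalk σ α) : Prop :=
  ∀ W : CWalk σ α, ∃ μ : ι → ℤ, W.flow - ∑ i, μ i • (B i).flow ∈ facialSubgroup σ α

/-- `F` is the complete boundary list of one face (starting anywhere on it). -/
def IsFaceBoundary {X : Type*} (σ α : Equiv.Perm X) (F : List X) : Prop :=
  ∃ (d : X) (k : ℕ), 0 < k ∧ ((fperm σ α) ^ k) d = d ∧
    (∀ i : ℕ, 0 < i → i < k → ((fperm σ α) ^ i) d ≠ d) ∧
    F = (List.range k).map fun i => ((fperm σ α) ^ i) d

/-- Elementary combinatorial homotopy moves on closed walks: deletion of a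
spur, deletion of a facial boundary, rotation of the base point. -/
inductive HomotopyStep {X : Type*} (σ α : Equiv.Perm X) : List X → List X → Prop
  | spur (W₁ W₂ : List X) (d : X) : HomotopyStep σ α (W₁ ++ d :: α d :: W₂) (W₁ ++ W₂)
  | face (W₁ W₂ F : List X) (hF : IsFaceBoundary σ α F) :
      HomotopyStep σ α (W₁ ++ F ++ W₂) (W₁ ++ W₂)
  | rot (d : X) (W : List X) : HomotopyStep σ α (d :: W) (W ++ [d])

/-- A closed walk (given by its dart list) is contractible when it is
null-homotopic. -/
def NullHomotopic {X : Type*} (σ α : Equiv.Perm X) (W : List X) : Prop :=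
  Relation.EqvGen (HomotopyStep σ α) W []

/-! ### Schnyder angle labellings -/

/-- The EDGE pattern on the four corner labels in clockwise order around an
edge: either all four labels are equal (type 0 edge), or they are cyclically
`i-1, i, i, i+1` for some colour `i` (type 1 and type 2 edges). -/
def edgePattern (x : Fin 4 → ZMod 3) : Prop :=
  (∀ k, x k = x 0) ∨
    ∃ (i : ZMod 3) (j : Fin 4), x j = i - 1 ∧ x (j + 1) = i ∧ x (j + 2) = i ∧ x (j + 3) = i + 1

/-- The EDGE condition at the edge `{d, α d}`: in clockwise order around the
edge, the four incident corners are `d, σ⁻¹ (α d), α d, σ⁻¹ d`. -/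
def EdgeCond {X : Type*} (σ α : Equiv.Perm X) (lab : X → ZMod 3) (d : X) : Prop :=
  edgePattern ![lab d, lab (σ⁻¹ (α d)), lab (α d), lab (σ⁻¹ d)]

/-- An EDGE angle labelling (= Schnyder labelling). -/
def IsSchnyderLabeling {X : Type*} (σ α : Equiv.Perm X) (lab : X → ZMod 3) : Prop :=
  ∀ d, EdgeCond σ α lab d

/-- ℕ*-VERTEX (in presence of the EDGE condition): no vertex has all its
corners of the same colour. -/
def VertexNonconstant {X : Type*} (σ : Equiv.Perm X) (lab : X → ZMod 3) : Prop :=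
  ∀ d, ∃ d', σ.SameCycle d d' ∧ lab d' ≠ lab d

/-- ℕ*-FACE (in presence of the EDGE condition): no face has all its corners of
the same colour. -/
def FaceNonconstant {X : Type*} (σ α : Equiv.Perm X) (lab : X → ZMod 3) : Prop :=
  ∀ d, ∃ d', (fperm σ α).SameCycle d d' ∧ lab d' ≠ lab d

/-- A (generalized) Schnyder wood, presented by its angle labelling: an EDGE,
ℕ*-VERTEX, ℕ*-FACE angle labelling (on the torus this is exactly a toroidal
Schnyder wood). -/
def IsSchnyderWood {X : Type*} (σ α : Equiv.Perm X) (lab : X → ZMod 3) : Prop :=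
  IsSchnyderLabeling σ α lab ∧ VertexNonconstant σ lab ∧ FaceNonconstant σ α lab

/-- The dart `d` carries the outgoing direction of colour `i` of its edge:
its two adjacent corners at its tail are labelled `i - 1` (counterclockwise
side) and `i + 1` (clockwise side). -/
def OutDart {X : Type*} (σ : Equiv.Perm X) (lab : X → ZMod 3) (i : ZMod 3) (d : X) : Prop :=
  lab d = i - 1 ∧ lab (σ⁻¹ d) = i + 1

/-- A monochromatic cycle of colour `i` (an `i`-cycle): a directed cycle all of
whose darts are outgoing of colour `i`. -/
def IsMonoCycle {X : Type*} (σ α : Equiv.Perm X) (lab : X → ZMod 3) (i : ZMod 3)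
    (C : CWalk σ α) : Prop :=
  C.IsCycle ∧ ∀ k, OutDart σ lab i (C.darts k)

/-- Half-crossing Schnyder wood: some pair of monochromatic cycles of different
colours cross. -/
def HalfCrossingSW {X : Type*} (σ α : Equiv.Perm X) (lab : X → ZMod 3) : Prop :=
  ∃ (i j : ZMod 3) (C C' : CWalk σ α), i ≠ j ∧ IsMonoCycle σ α lab i C ∧
    IsMonoCycle σ α lab j C' ∧ CrossingCycles C C'

/-- `i`-crossing Schnyder wood: every `i`-cycle crosses every monochromatic
cycle of any other colour. -/
def ICrossingSW {X : Type*} (σ α : Equiv.Perm X) (lab : X → ZMod 3) (i : ZMod 3) : Prop :=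
  ∀ (j : ZMod 3) (C C' : CWalk σ α), j ≠ i → IsMonoCycle σ α lab i C →
    IsMonoCycle σ α lab j C' → CrossingCycles C C'

/-- Intersecting Schnyder wood. -/
def IntersectingSW {X : Type*} (σ α : Equiv.Perm X) (lab : X → ZMod 3) : Prop :=
  ∀ (i : ZMod 3) (C : CWalk σ α), IsMonoCycle σ α lab i C →
    (∃ C', IsMonoCycle σ α lab (i - 1) C' ∧ C.Intersects C') ∧
    (∃ C', IsMonoCycle σ α lab (i + 1) C' ∧ C.Intersects C')

/-- Crossing Schnyder wood. -/
def CrossingSW {X : Type*} (σ α : Equiv.Perm X) (lab : X → ZMod 3) : Prop :=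
  ∀ (i : ZMod 3) (C : CWalk σ α), IsMonoCycle σ α lab i C →
    (∃ C', IsMonoCycle σ α lab (i - 1) C' ∧ CrossingCycles C C') ∧
    (∃ C', IsMonoCycle σ α lab (i + 1) C' ∧ CrossingCycles C C')

/-! ### Combinatorial maps -/

/-- A map on a compact orientable surface, as a rotation system: finitely many
darts, vertex rotation `σ` (counterclockwise), fixed-point-free edge involution
`α`; connectedness makes the embedding cellular. -/
structure CombMap where
  D : Type
  fin : Fintype D
  σ : Equiv.Perm D
  α : Equiv.Perm D
  α_invol : ∀ d, α (α d) = d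
  α_fixfree : ∀ d, α d ≠ d
  connected : ∀ d d', Relation.EqvGen (fun a b => b = σ a ∨ b = α a) d d'

attribute [instance] CombMap.fin

namespace CombMap

variable (M : CombMap)

def facePerm : Equiv.Perm M.D := fperm M.σ M.α

abbrev SameVertex (d d' : M.D) : Prop := M.σ.SameCycle d d'

abbrev SameFace (d d' : M.D) : Prop := M.facePerm.SameCycle d d'

/-- Closed walks of the (primal) map. -/
abbrev ClosedWalk := CWalk M.σ M.α

/-- Closed walks of the dual map (dual vertices = faces of `M`). -/
abbrev DualClosedWalk := CWalk M.facePerm M.α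

/-- Euler characteristic `V - E + F`; it equals `2 - 2g` where `g` is the genus
of the surface. -/
def eulerChar : ℤ :=
  (numOrbits M.σ : ℤ) - (numOrbits M.α : ℤ) + (numOrbits M.facePerm : ℤ)

/-- A closed walk is `0`-homologous; on the torus a cycle is contractible if
and only if its flow is `0`-homologous. -/
def FlowContractible (W : M.ClosedWalk) : Prop := W.flow ∈ facialSubgroup M.σ M.α

/-- No contractible loop. -/
def NoContractibleLoop : Prop :=
  ∀ d : M.D, M.SameVertex d (M.α d) → ¬ NullHomotopic M.σ M.α [d]

/-- No homotopic multiple edges: two parallel edges never bound a disk. -/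
def NoHomotopicMultiEdges : Prop :=
  ∀ d d' : M.D, M.SameVertex d d' → M.SameVertex (M.α d) (M.α d') →
    NullHomotopic M.σ M.α [d, M.α d'] → d' = d ∨ d' = M.α d

/-- A toroidal map: a map on the torus (Euler characteristic 0) without
contractible loop nor homotopic multiple edges. -/
def IsToroidal : Prop := M.eulerChar = 0 ∧ M.NoContractibleLoop ∧ M.NoHomotopicMultiEdges

/-- A triangulation: every face has size three. -/
def IsTriangulation : Prop := ∀ d, (M.facePerm ^ 3) d = d ∧ M.facePerm d ≠ d

/-- A simple map: no loops and no multiple edges. -/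
def Simple : Prop :=
  (∀ d : M.D, ¬ M.SameVertex d (M.α d)) ∧
    ∀ d d' : M.D, M.SameVertex d d' → M.SameVertex (M.α d) (M.α d') → d' = d ∨ d' = M.α d

/-- The pairing between a flow of `M` and a flow of its dual (the dual dart of
a dart being itself); this is twice the `β` of the paper, which is harmless. -/
def beta (p q : M.D → ℤ) : ℤ := ∑ d : M.D, p d * q d

/-- The characteristic flow of an oriented subgraph given by a set of darts. -/
def setFlow (S : Set M.D) : M.D → ℤ := fun d =>
  (if d ∈ S then (1 : ℤ) else 0) - (if M.α d ∈ S then 1 else 0)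

/-- The darts that are outgoing (in some colour) in a Schnyder wood: the
orientation of the map associated with the Schnyder wood. -/
def outSet (lab : M.D → ZMod 3) : Set M.D := {d | ∃ i, OutDart M.σ lab i d}

/-- The angle labelling of the dual Schnyder wood (the corner of the dual dart
`d` is the corner of `M` labelled by `facePerm d`). -/
def dualLab (lab : M.D → ZMod 3) : M.D → ZMod 3 := fun d => lab (M.facePerm d)

/-! #### The primal–dual completion `Ĝ` and its orientations

The edges of `Ĝ` are indexed by `M.D × Bool` : `(d, false)` joins the tail
vertex of `d` to the edge-vertex of the edge of `d`, and `(d, true)` joins the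
face on the left of `d` to this edge-vertex.  An orientation of `Ĝ` assigns
`true` to an edge when it is oriented from the primal/dual vertex towards the
edge-vertex (an "out-edge"). -/

/-- The orientation of `Ĝ` associated with an angle labelling: an edge of `Ĝ`
is an out-edge exactly when, crossing it counterclockwise around its
primal/dual vertex, the corner label increases by one. -/
def labOrientation (lab : M.D → ZMod 3) : M.D × Bool → Bool := fun x =>
  if x.2 = false then (if lab x.1 = lab (M.σ⁻¹ x.1) + 1 then true else false)
  else (if lab (M.facePerm x.1) = lab x.1 + 1 then true else false)

/-- A Schnyder orientation of `Ĝ`: an orientation corresponding to a Schnyder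
(EDGE) labelling of `M`. -/
def IsSchnyderOrientation (o : M.D × Bool → Bool) : Prop :=
  ∃ lab : M.D → ZMod 3, IsSchnyderLabeling M.σ M.α lab ∧ o = M.labOrientation lab

def outdegPrimal (o : M.D × Bool → Bool) (d0 : M.D) : ℕ :=
  Nat.card {d : M.D // M.SameVertex d0 d ∧ o (d, false) = true}

def outdegDual (o : M.D × Bool → Bool) (d0 : M.D) : ℕ :=
  Nat.card {d : M.D // M.SameFace d0 d ∧ o (d, true) = true}

def outdegEdge (o : M.D × Bool → Bool) (d0 : M.D) : ℕ :=
  (if o (d0, false) = false then 1 else 0) + (if o (M.α d0, false) = false then 1 else 0) +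
    (if o (d0, true) = false then 1 else 0) + (if o (M.α d0, true) = false then 1 else 0)

/-- A `mod₃`-orientation of `Ĝ`: primal- and dual-vertices have outdegree
divisible by 3, edge-vertices have outdegree `1 mod 3`. -/
def IsMod3Orientation (o : M.D × Bool → Bool) : Prop :=
  (∀ d0, 3 ∣ M.outdegPrimal o d0) ∧ (∀ d0, 3 ∣ M.outdegDual o d0) ∧
    ∀ d0, M.outdegEdge o d0 % 3 = 1

/-- `γ(C)` for a cycle `C` of `M`: the number of edges of `Ĝ` leaving `Ĉ` on
its right minus the number of edges of `Ĝ` leaving `Ĉ` on its left. -/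
def gammaPDC (o : M.D × Bool → Bool) (C : M.ClosedWalk) : ℤ :=
  (∑ k : Fin C.n, ∑ d : M.D,
      ((if ccwSector M.σ (M.α (C.darts (cyclicPrev C.pos k))) (C.darts k) d ∧
            o (d, false) = true then (1 : ℤ) else 0) -
        (if ccwSector M.σ (C.darts k) (M.α (C.darts (cyclicPrev C.pos k))) d ∧
            o (d, false) = true then 1 else 0))) +
    ∑ k : Fin C.n,
      ((if o (M.α (C.darts k), true) = false then (1 : ℤ) else 0) -
        (if o (C.darts k, true) = false then 1 else 0))

/-- A Schnyder wood is balanced when `γ(C) = 0` for every non-contractible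
cycle `C` of the map. -/
def BalancedLab (lab : M.D → ZMod 3) : Prop :=
  ∀ C : M.ClosedWalk, C.IsCycle → ¬ M.FlowContractible C →
    M.gammaPDC (M.labOrientation lab) C = 0

/-- `γ(C)` with respect to an orientation of the edges of `M` itself (the
simplified form of `γ` for triangulations): number of edges of `M` leaving `C`
on its right minus the number leaving `C` on its left. -/
def gammaSet (A : Set M.D) (C : M.ClosedWalk) : ℤ :=
  ∑ k : Fin C.n, ∑ d : M.D,
    ((if ccwSector M.σ (M.α (C.darts (cyclicPrev C.pos k))) (C.darts k) d ∧ d ∈ A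
        then (1 : ℤ) else 0) -
      (if ccwSector M.σ (C.darts k) (M.α (C.darts (cyclicPrev C.pos k))) d ∧ d ∈ A
        then 1 else 0))

/-- Balanced Schnyder wood of a toroidal triangulation (via the simplified
`γ` on the edges of `M`). -/
def BalancedTri (lab : M.D → ZMod 3) : Prop :=
  ∀ C : M.ClosedWalk, C.IsCycle → ¬ M.FlowContractible C →
    M.gammaSet (M.outSet lab) C = 0

/-! #### Orientations of the map itself -/

/-- An orientation of the edges of `M` (one dart chosen per edge). -/
def IsOrientation (A : Set M.D) : Prop := ∀ d, d ∈ A ↔ M.α d ∉ A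

/-- The characteristic flow of `D \ D'` for two orientations `A, A'`. -/
def orientDiffFlow (A A' : Set M.D) : M.D → ℤ := fun d =>
  if d ∈ A ∧ d ∉ A' then 1 else if d ∉ A ∧ d ∈ A' then -1 else 0

/-- A `0`-homologous flow is counterclockwise with respect to the face `f0`
(given by one of its darts) when it is a combination with nonnegative
coefficients of the facial flows of the faces different from `f0`. -/
def CCWFlow (f0 : M.D) (t : M.D → ℤ) : Prop :=
  ∃ c : M.D → ℕ, (∀ d, M.SameFace d f0 → c d = 0) ∧
    t = ∑ d : M.D, (c d : ℤ) • faceFlow M.σ M.α d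

def outAt (A : Set M.D) (d0 : M.D) : ℕ :=
  Nat.card {d : M.D // M.SameVertex d0 d ∧ d ∈ A}

/-- A 3-orientation: every vertex has outdegree exactly 3. -/
def IsThreeOrientation (A : Set M.D) : Prop :=
  M.IsOrientation A ∧ ∀ d0, M.outAt A d0 = 3

/-! #### Middle walks and middle cycles -/

/-- In a 3-orientation `A`, `b` is the middle outgoing edge after `d`: it
leaves the head of `d`, with exactly one outgoing dart strictly on each side of
the path `d, b`. -/
def IsMiddleSucc (A : Set M.D) (d b : M.D) : Prop :=
  b ∈ A ∧ M.σ.SameCycle (M.α d) b ∧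
    Nat.card {x : M.D // x ∈ A ∧ ccwSector M.σ (M.α d) b x} = 1 ∧
    Nat.card {x : M.D // x ∈ A ∧ ccwSector M.σ b (M.α d) x} = 1

/-- The middle walk: an infinite sequence of darts, each followed by the middle
outgoing edge at its head. -/
def IsMiddleWalk (A : Set M.D) (w : ℕ → M.D) : Prop :=
  w 0 ∈ A ∧ ∀ n, M.IsMiddleSucc A (w n) (w (n + 1))

/-- A middle cycle: a directed cycle such that every vertex on it has exactly
one edge leaving on the left of the cycle (and hence exactly one on the
right). -/
def IsMiddleCycle (A : Set M.D) (C : M.ClosedWalk) : Prop :=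
  C.IsCycle ∧ (∀ k, C.darts k ∈ A) ∧
    ∀ k, Nat.card {x : M.D // x ∈ A ∧
        ccwSector M.σ (C.darts (cyclicNext C.pos k)) (M.α (C.darts k)) x} = 1 ∧
      Nat.card {x : M.D // x ∈ A ∧
        ccwSector M.σ (M.α (C.darts k)) (C.darts (cyclicNext C.pos k)) x} = 1

end CombMap

/-! ### Universal covers -/

/-- A universal cover of the map `M`: a connected, simply connected covering of
(maps given by) rotation systems.  `p` commutes with the rotations, is a local
bijection on vertices, the cover is connected, and every closed walk of the
cover is null-homotopic (simple connectivity). -/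
structure UniversalCover (M : CombMap) where
  Dc : Type
  σ' : Equiv.Perm Dc
  α' : Equiv.Perm Dc
  α'_invol : ∀ x, α' (α' x) = x
  p : Dc → M.D
  p_surj : Function.Surjective p
  p_σ : ∀ x, p (σ' x) = M.σ (p x)
  p_α : ∀ x, p (α' x) = M.α (p x)
  locInj : ∀ x y, σ'.SameCycle x y → p x = p y → x = y
  connected : ∀ x y, Relation.EqvGen (fun a b => b = σ' a ∨ b = α' a) x y
  simplyConnected : ∀ W : CWalk σ' α', NullHomotopic σ' α' W.toList

/-- A set of darts closed under the vertex rotation: a set of vertices. -/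
def VertexClosed {X : Type*} (σ : Equiv.Perm X) (A : Set X) : Prop :=
  ∀ x y, σ.SameCycle x y → (x ∈ A ↔ y ∈ A)

/-- The set of darts meets at most two vertices. -/
def AtMostTwoVertexClasses {X : Type*} (σ : Equiv.Perm X) (A : Set X) : Prop :=
  ∃ a b : X, ∀ x ∈ A, σ.SameCycle x a ∨ σ.SameCycle x b

/-- Reachability in the graph of the map avoiding the vertices of `A`. -/
def ReachAvoiding {X : Type*} (σ α : Equiv.Perm X) (A : Set X) : X → X → Prop :=
  Relation.EqvGen fun u v => u ∉ A ∧ v ∉ A ∧ (v = σ u ∨ v = α u)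

/-- 3-connectivity of the graph of a (possibly infinite) rotation system: at
least four vertices, and removing any (at most) two vertices leaves it
connected. -/
def ThreeConnectedMap {X : Type*} (σ α : Equiv.Perm X) : Prop :=
  (∃ a b c d : X, ¬σ.SameCycle a b ∧ ¬σ.SameCycle a c ∧ ¬σ.SameCycle a d ∧
      ¬σ.SameCycle b c ∧ ¬σ.SameCycle b d ∧ ¬σ.SameCycle c d) ∧
    ∀ A : Set X, VertexClosed σ A → AtMostTwoVertexClasses σ A →
      ∀ x y, x ∉ A → y ∉ A → ReachAvoiding σ α A x y

/-- A map is essentially 3-connected when its universal cover is 3-connected. -/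
def CombMap.EssentiallyThreeConnected (M : CombMap) : Prop :=
  ∀ U : UniversalCover M, ThreeConnectedMap U.σ' U.α'

/-! ### Miscellaneous helpers -/

/-- The order relation of a distributive lattice structure. -/
def distribLE {T : Type*} (inst : DistribLattice T) : T → T → Prop :=
  (inst.toLattice.toSemilatticeSup.toPartialOrder.toPreorder.toLE).le

/-- The strict order relation of a linear order structure. -/
def linLT {T : Type*} (L : LinearOrder T) : T → T → Prop :=
  (L.toPartialOrder.toPreorder.toLT).lt

/-- A basic toroidal map: a non-contractible cycle on `n + 1` vertices together
with `n + 1` homologous non-contractible loops, one at each vertex.  Around the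
vertex `x`, the counterclockwise order of the darts is: `(x,0)` towards the
next vertex on the cycle, `(x,1)` the loop leaving, `(x,2)` towards the
previous vertex, `(x,3)` the loop returning. -/
def CombMap.IsBasic (M : CombMap) : Prop :=
  ∃ (n : ℕ) (e : M.D ≃ ZMod (n + 1) × Fin 4),
    (∀ (x : ZMod (n + 1)) (j : Fin 4), e (M.σ (e.symm (x, j))) = (x, j + 1)) ∧
      ∀ x : ZMod (n + 1),
        e (M.α (e.symm (x, 0))) = (x + 1, 2) ∧
        e (M.α (e.symm (x, 2))) = (x - 1, 0) ∧
        e (M.α (e.symm (x, 1))) = (x, 3) ∧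
        e (M.α (e.symm (x, 3))) = (x, 1)



/-! ### Auxiliary development for Statement 4 -/

section Stmt4Aux

variable (M : CombMap)

lemma setFlow_alpha (S : Set M.D) (d : M.D) :
    M.setFlow S (M.α d) = - M.setFlow S d := by
  simp only [CombMap.setFlow, M.α_invol d]
  ring

lemma faceFlow_alpha (d0 d : M.D) :
    faceFlow M.σ M.α d0 (M.α d) = - faceFlow M.σ M.α d0 d := by
  simp only [faceFlow, M.α_invol d]
  ring

lemma cyclicNext_bij {n : ℕ} (pos : 0 < n) : Function.Bijective (cyclicNext pos) := by
  rw [← Finite.injective_iff_bijective]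
  intro k k' h
  have e : ((k : ℕ) + 1) % n = ((k' : ℕ) + 1) % n := congrArg Fin.val h
  have hk := k.isLt
  have hk' := k'.isLt
  have aux : ∀ m : ℕ, m < n → (m + 1) % n = if m + 1 = n then 0 else m + 1 := by
    intro m hm
    split
    · next hh => rw [hh, Nat.mod_self]
    · next hh => exact Nat.mod_eq_of_lt (by omega)
  rw [aux _ hk, aux _ hk'] at e
  apply Fin.ext
  split_ifs at e <;> omega

/-- Pairing of an antisymmetric flow with the flow of a dual walk. -/
lemma beta_flow (p : M.D → ℤ) (hp : ∀ d, p (M.α d) = - p d)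
    (W : CWalk M.facePerm M.α) :
    M.beta p W.flow = 2 * ∑ k : Fin W.n, p (W.darts k) := by
  unfold CombMap.beta CWalk.flow
  have key : ∀ c : M.D,
      ∑ d : M.D, p d * ((if c = d then (1 : ℤ) else 0) - (if c = M.α d then 1 else 0))
        = 2 * p c := by
    intro c
    have h1 : ∑ d : M.D, p d * (if c = d then (1 : ℤ) else 0) = p c := by
      simp [mul_ite, Finset.sum_ite_eq]
    have h2 : ∑ d : M.D, p d * (if c = M.α d then (1 : ℤ) else 0) = p (M.α c) := by
      have hcond : ∀ d : M.D, (c = M.α d) = (M.α c = d) := by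
        intro d
        apply propext
        constructor
        · intro h; rw [h, M.α_invol]
        · intro h; rw [← h, M.α_invol]
      simp only [hcond]
      simp [mul_ite, Finset.sum_ite_eq]
    calc ∑ d : M.D, p d * ((if c = d then (1 : ℤ) else 0) - (if c = M.α d then 1 else 0))
        = (∑ d : M.D, p d * (if c = d then (1 : ℤ) else 0))
          - ∑ d : M.D, p d * (if c = M.α d then (1 : ℤ) else 0) := by
          rw [← Finset.sum_sub_distrib]; congr 1; funext d; ring
      _ = p c - p (M.α c) := by rw [h1, h2]
      _ = 2 * p c := by rw [hp c]; ring
  calc ∑ d : M.D, p d * ∑ k : Fin W.n,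
          ((if W.darts k = d then (1 : ℤ) else 0) - (if W.darts k = M.α d then 1 else 0))
      = ∑ d : M.D, ∑ k : Fin W.n,
          p d * ((if W.darts k = d then (1 : ℤ) else 0) - (if W.darts k = M.α d then 1 else 0)) := by
        congr 1; funext d; exact Finset.mul_sum _ _ _
    _ = ∑ k : Fin W.n, ∑ d : M.D,
          p d * ((if W.darts k = d then (1 : ℤ) else 0) - (if W.darts k = M.α d then 1 else 0)) :=
        Finset.sum_comm
    _ = ∑ k : Fin W.n, 2 * p (W.darts k) := by
        refine Finset.sum_congr rfl fun k _ => ?_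
        exact key (W.darts k)
    _ = 2 * ∑ k : Fin W.n, p (W.darts k) := (Finset.mul_sum _ _ _).symm

lemma sum_faceFlow_walk (d0 : M.D) (W : CWalk M.facePerm M.α) :
    ∑ k : Fin W.n, faceFlow M.σ M.α d0 (W.darts k) = 0 := by
  set G : M.D → ℤ :=
    fun y => @ite ℤ ((fperm M.σ M.α).SameCycle d0 y) (Classical.propDecidable _) 1 0 with hG
  have hF : ∀ y : M.D, faceFlow M.σ M.α d0 y = G y - G (M.α y) := by
    intro y
    simp only [hG]
    unfold faceFlow
    congr!
  have hB : ∀ k : Fin W.n, G (M.α (W.darts k)) = G (W.darts (cyclicNext W.pos k)) := by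
    intro k
    have hc : (fperm M.σ M.α).SameCycle (M.α (W.darts k)) (W.darts (cyclicNext W.pos k)) :=
      W.chain k
    simp only [hG]
    congr! 1
    exact ⟨fun h => h.trans hc, fun h => h.trans hc.symm⟩
  calc ∑ k : Fin W.n, faceFlow M.σ M.α d0 (W.darts k)
      = ∑ k : Fin W.n, (G (W.darts k) - G (M.α (W.darts k))) :=
        Finset.sum_congr rfl fun k _ => hF _
    _ = (∑ k : Fin W.n, G (W.darts k)) - ∑ k : Fin W.n, G (M.α (W.darts k)) :=
        Finset.sum_sub_distrib _ _
    _ = 0 := by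
        rw [Finset.sum_congr rfl fun k _ => hB k]
        rw [Function.Bijective.sum_comp (cyclicNext_bij W.pos) fun k => G (W.darts k)]
        exact sub_self _

lemma beta_facial_zero (W : CWalk M.facePerm M.α) (f : M.D → ℤ)
    (hf : f ∈ facialSubgroup M.σ M.α) : M.beta f W.flow = 0 := by
  induction hf using AddSubgroup.closure_induction with
  | mem x hx =>
    obtain ⟨d0, rfl⟩ := hx
    rw [beta_flow M _ (faceFlow_alpha M d0) W, sum_faceFlow_walk M d0 W, mul_zero]
  | zero => simp [CombMap.beta]
  | add f g _ _ hf hg => simp only [CombMap.beta, Pi.add_apply, add_mul,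
      Finset.sum_add_distrib] at hf hg ⊢; omega
  | neg f _ hf => simp only [CombMap.beta, Pi.neg_apply, neg_mul,
      Finset.sum_neg_distrib] at hf ⊢; omega

/-- A function constant on faces gives rise to an element of the facial subgroup. -/
lemma faceConst_mem (ψ : M.D → ℤ) (hψ : ∀ d d', M.SameFace d d' → ψ d = ψ d') :
    (fun d => ψ d - ψ (M.α d)) ∈ facialSubgroup M.σ M.α := by
  classical
  letI : Fintype (Quotient (permSetoid M.facePerm)) := Fintype.ofFinite _
  set Q := Quotient (permSetoid M.facePerm) with hQ
  have hgen : ∀ q : Q, faceFlow M.σ M.α q.out ∈ facialSubgroup M.σ M.α := fun q =>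
    AddSubgroup.subset_closure ⟨q.out, rfl⟩
  have hmem : (∑ q : Q, ψ q.out • faceFlow M.σ M.α q.out) ∈ facialSubgroup M.σ M.α :=
    AddSubgroup.sum_mem _ fun q _ => AddSubgroup.zsmul_mem _ (hgen q) _
  set G : Q → M.D → ℤ :=
    fun q y => @ite ℤ ((fperm M.σ M.α).SameCycle q.out y) (Classical.propDecidable _) 1 0 with hG
  have hsplit : ∀ (q : Q) (y : M.D),
      faceFlow M.σ M.α q.out y = G q y - G q (M.α y) := by
    intro q y
    simp only [hG]
    unfold faceFlow
    congr!
  have key : ∀ y : M.D, ∑ q : Q, ψ q.out * G q y = ψ y := by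
    intro y
    have hcond : ∀ q : Q, G q y
        = if q = (Quotient.mk (permSetoid M.facePerm) y : Q) then 1 else 0 := by
      intro q
      simp only [hG]
      congr! 1
      constructor
      · intro h
        rw [← q.out_eq]
        exact Quotient.sound h
      · intro h
        exact Quotient.exact (q.out_eq.trans h)
    simp only [hcond, mul_ite, mul_one, mul_zero]
    rw [Finset.sum_ite_eq' Finset.univ (Quotient.mk (permSetoid M.facePerm) y : Q)
      (fun q => ψ q.out)]
    rw [if_pos (Finset.mem_univ _)]
    exact hψ _ _ (Quotient.exact ((Quotient.mk (permSetoid M.facePerm) y : Q).out_eq))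
  have heq : (fun d => ψ d - ψ (M.α d)) = ∑ q : Q, ψ q.out • faceFlow M.σ M.α q.out := by
    funext d
    rw [Finset.sum_apply]
    simp only [Pi.smul_apply, smul_eq_mul, hsplit, mul_sub]
    rw [Finset.sum_sub_distrib, key d, key (M.α d)]
  rw [heq]
  exact hmem

/-! #### Dual walks as lists of crossed darts -/

/-- `Link M L a b`: there is a walk in the dual graph from the face of `a` to the
face of `b` whose list of crossed darts is `L`. -/
def Link (M : CombMap) : List M.D → M.D → M.D → Prop
  | [], a, b => M.SameFace a b
  | d :: L, a, b => M.SameFace a d ∧ Link M L (M.α d) b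

lemma link_congr_left {L : List M.D} {a a' b : M.D} (h : M.SameFace a' a) :
    Link M L a b → Link M L a' b := by
  match L with
  | [] => exact fun hl => h.trans hl
  | d :: L => exact fun hl => ⟨h.trans hl.1, hl.2⟩

lemma link_congr_right {L : List M.D} {a b b' : M.D} (h : M.SameFace b b') :
    Link M L a b → Link M L a b' := by
  induction L generalizing a with
  | nil => exact fun hl => hl.trans h
  | cons d L ih => exact fun hl => ⟨hl.1, ih hl.2⟩

lemma link_append {L L' : List M.D} {a b c : M.D} :
    Link M L a b → Link M L' b c → Link M (L ++ L') a c := by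
  induction L generalizing a with
  | nil => exact fun hl hl' => link_congr_left M hl hl'
  | cons d L ih => exact fun hl hl' => ⟨hl.1, ih hl.2 hl'⟩

lemma link_reverse {L : List M.D} {a b : M.D} (h : Link M L a b) :
    Link M (L.reverse.map M.α) b a := by
  induction L generalizing a with
  | nil => exact h.symm
  | cons d L ih =>
    obtain ⟨h1, h2⟩ := h
    have hsingle : Link M [M.α d] (M.α d) a := by
      refine ⟨Equiv.Perm.SameCycle.refl _ _, ?_⟩
      show M.SameFace (M.α (M.α d)) a
      rw [M.α_invol]
      exact h1.symm
    have := link_append M (ih h2) hsingle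
    simpa using this

lemma exists_link (a b : M.D) : ∃ L, Link M L a b := by
  have h := M.connected a b
  induction h with
  | rel x y hxy =>
    rcases hxy with h | h
    · refine ⟨[M.facePerm⁻¹ x], ⟨-1, by simp⟩, ?_⟩
      show M.SameFace (M.α (M.facePerm⁻¹ x)) y
      have hax : M.α (M.facePerm⁻¹ x) = M.σ x := by
        show M.α ((fperm M.σ M.α)⁻¹ x) = M.σ x
        simp [fperm]
      rw [hax, ← h]
    · exact ⟨[x], Equiv.Perm.SameCycle.refl _ _, by
        show M.SameFace (M.α x) y
        rw [← h]⟩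
  | refl x => exact ⟨[], Equiv.Perm.SameCycle.refl _ _⟩
  | symm x y _ ih => obtain ⟨L, hL⟩ := ih; exact ⟨_, link_reverse M hL⟩
  | trans x y z _ _ ih1 ih2 =>
    obtain ⟨L, hL⟩ := ih1; obtain ⟨L', hL'⟩ := ih2
    exact ⟨_, link_append M hL hL'⟩

/-- The cost of a crossing list: total flow of `S` crossed. -/
def lcost (S : Set M.D) (L : List M.D) : ℤ := (L.map (M.setFlow S)).sum

lemma lcost_nil (S : Set M.D) : lcost M S [] = 0 := by simp [lcost]

lemma lcost_append (S : Set M.D) (L L' : List M.D) :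
    lcost M S (L ++ L') = lcost M S L + lcost M S L' := by
  simp [lcost]

lemma lcost_cons (S : Set M.D) (d : M.D) (L : List M.D) :
    lcost M S (d :: L) = M.setFlow S d + lcost M S L := by
  simp [lcost]

lemma lcost_reverse (S : Set M.D) (L : List M.D) :
    lcost M S (L.reverse.map M.α) = - lcost M S L := by
  induction L with
  | nil => simp [lcost]
  | cons d L ih =>
    simp only [List.reverse_cons, List.map_append, List.map_cons, List.map_nil]
    rw [lcost_append, ih, lcost_cons, lcost_nil, lcost_cons, setFlow_alpha]
    ring

lemma link_get : ∀ (L : List M.D) (a b : M.D), Link M L a b →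
    ∀ (i : ℕ) (hi : i < L.length),
      M.SameFace (M.α (L.get ⟨i, hi⟩))
        (if h : i + 1 < L.length then L.get ⟨i + 1, h⟩ else b) := by
  intro L
  induction L with
  | nil => intro a b _ i hi; exact absurd hi (by simp)
  | cons d L ih =>
    intro a b h i hi
    obtain ⟨h1, h2⟩ := h
    match i with
    | 0 =>
      cases L with
      | nil =>
        rw [dif_neg (by simp)]
        exact h2
      | cons e L' =>
        rw [dif_pos (by simp)]
        exact h2.1
    | (i' + 1) =>
      have hi' : i' < L.length := by simpa using hi
      have hrec := ih (M.α d) b h2 i' hi'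
      by_cases hc : i' + 1 < L.length
      · rw [dif_pos hc] at hrec
        rw [dif_pos (by simpa using hc)]
        exact hrec
      · rw [dif_neg hc] at hrec
        rw [dif_neg (by simpa using hc)]
        exact hrec

lemma sum_fin_list {X : Type*} (f : X → ℤ) (L : List X) :
    ∑ k : Fin L.length, f (L.get k) = (L.map f).sum := by
  conv_rhs => rw [← List.ofFn_get L]
  rw [List.map_ofFn, List.sum_ofFn]
  rfl

lemma closed_cost (S : Set M.D)
    (hyp : ∀ W : CWalk M.facePerm M.α, (3 : ℤ) ∣ M.beta (M.setFlow S) W.flow) :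
    ∀ (L : List M.D) (a : M.D), Link M L a a → (3 : ℤ) ∣ lcost M S L := by
  intro L a hL
  cases L with
  | nil => simp [lcost]
  | cons d L' =>
    have hlen : 0 < (d :: L').length := by simp
    have hchain : ∀ k : Fin (d :: L').length,
        M.facePerm.SameCycle (M.α ((d :: L').get k)) ((d :: L').get (cyclicNext hlen k)) := by
      intro k
      by_cases hk : (k : ℕ) + 1 < (d :: L').length
      · have h1 := link_get M (d :: L') a a hL k k.isLt
        rw [dif_pos hk] at h1
        have h2 : cyclicNext hlen k = ⟨(k : ℕ) + 1, hk⟩ :=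
          Fin.ext (Nat.mod_eq_of_lt hk)
        rw [h2]
        exact h1
      · have h1 := link_get M (d :: L') a a hL k k.isLt
        rw [dif_neg hk] at h1
        have hk2 : (k : ℕ) + 1 = (d :: L').length := by
          have := k.isLt; omega
        have h2 : cyclicNext hlen k = ⟨0, hlen⟩ := by
          apply Fin.ext
          show ((k : ℕ) + 1) % (d :: L').length = 0
          rw [hk2, Nat.mod_self]
        have h3 : M.SameFace a ((d :: L').get ⟨0, hlen⟩) := hL.1
        rw [h2]
        exact h1.trans h3
    let W : CWalk M.facePerm M.α :=
      { n := (d :: L').length, pos := hlen, darts := fun k => (d :: L').get k, chain := hchain }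
    have h3 := hyp W
    rw [beta_flow M _ (setFlow_alpha M S) W] at h3
    have h4 : ∑ k : Fin W.n, M.setFlow S (W.darts k) = lcost M S (d :: L') :=
      sum_fin_list _ (d :: L')
    rw [h4] at h3
    omega

lemma zmod3_of_dvd {x y : ℤ} (h : (3 : ℤ) ∣ x - y) : ((x : ZMod 3) = (y : ZMod 3)) := by
  have h2 : ((x - y : ℤ) : ZMod 3) = 0 := by
    obtain ⟨c, hc⟩ := h
    rw [hc]
    push_cast
    rw [show (3 : ZMod 3) = 0 from by decide, zero_mul]
  push_cast at h2
  exact sub_eq_zero.mp h2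

end Stmt4Aux

/-- An oriented subgraph `T` of a map `G` on an orientable
surface is partitionable if and only if it is a topological Tutte-orientation,
i.e. `β(T,W) ≡ 0 (mod 3)` for every closed walk `W` of the dual map `G*`. -/
theorem partitionable_iff_topological_tutte
    (M : CombMap) (S : Set M.D) (hS : ∀ d ∈ S, M.α d ∉ S) :
    (∃ T0 T1 T2 : Set M.D, T0 ∪ T1 ∪ T2 = S ∧
        Disjoint T0 T1 ∧ Disjoint T0 T2 ∧ Disjoint T1 T2 ∧
        Homologous M.σ M.α (M.setFlow T0) (M.setFlow T1) ∧
        Homologous M.σ M.α (M.setFlow T0) (M.setFlow T2) ∧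
        Homologous M.σ M.α (M.setFlow T1) (M.setFlow T2)) ↔
      ∀ W : CWalk M.facePerm M.α, (3 : ℤ) ∣ M.beta (M.setFlow S) W.flow := by
  constructor
  · rintro ⟨T0, T1, T2, hU, h01, h02, h12, H01, H02, H12⟩ W
    have hbeta_add : ∀ p q : M.D → ℤ,
        M.beta (p + q) W.flow = M.beta p W.flow + M.beta q W.flow := by
      intro p q
      simp [CombMap.beta, add_mul, Finset.sum_add_distrib]
    have hbeta_sub : ∀ p q : M.D → ℤ,
        M.beta (p - q) W.flow = M.beta p W.flow - M.beta q W.flow := by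
      intro p q
      simp [CombMap.beta, sub_mul, Finset.sum_sub_distrib]
    have hsum : M.setFlow S = M.setFlow T0 + M.setFlow T1 + M.setFlow T2 := by
      funext d
      have ind : ∀ x : M.D, (if x ∈ S then (1 : ℤ) else 0)
          = (if x ∈ T0 then 1 else 0) + (if x ∈ T1 then 1 else 0)
            + (if x ∈ T2 then 1 else 0) := by
        intro x
        rw [← hU]
        by_cases h0 : x ∈ T0
        · rw [if_pos (Set.mem_union_left _ (Set.mem_union_left _ h0)), if_pos h0,
            if_neg (Set.disjoint_left.mp h01 h0), if_neg (Set.disjoint_left.mp h02 h0)]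
          ring
        · by_cases h1 : x ∈ T1
          · rw [if_pos (Set.mem_union_left _ (Set.mem_union_right _ h1)), if_neg h0,
              if_pos h1, if_neg (Set.disjoint_left.mp h12 h1)]
            ring
          · by_cases h2 : x ∈ T2
            · rw [if_pos (Set.mem_union_right _ h2), if_neg h0, if_neg h1, if_pos h2]
              ring
            · have hnot : x ∉ T0 ∪ T1 ∪ T2 := by
                simp [Set.mem_union, h0, h1, h2]
              rw [if_neg hnot, if_neg h0, if_neg h1, if_neg h2]
              ring
      show M.setFlow S d = _
      simp only [CombMap.setFlow, Pi.add_apply]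
      rw [ind d, ind (M.α d)]
      ring
    have e1 : M.beta (M.setFlow T0) W.flow - M.beta (M.setFlow T1) W.flow = 0 := by
      rw [← hbeta_sub]
      exact beta_facial_zero M W _ H01
    have e2 : M.beta (M.setFlow T0) W.flow - M.beta (M.setFlow T2) W.flow = 0 := by
      rw [← hbeta_sub]
      exact beta_facial_zero M W _ H02
    have e3 : M.beta (M.setFlow S) W.flow = M.beta (M.setFlow T0) W.flow
        + M.beta (M.setFlow T1) W.flow + M.beta (M.setFlow T2) W.flow := by
      rw [hsum, hbeta_add, hbeta_add]
    refine ⟨M.beta (M.setFlow T0) W.flow, ?_⟩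
    omega
  · intro hyp
    by_cases hne : Nonempty M.D
    case neg =>
      have hSempty : S = ∅ := by
        ext d
        exact (hne ⟨d⟩).elim
      refine ⟨∅, ∅, ∅, by simp [hSempty], by simp, by simp, by simp, ?_, ?_, ?_⟩ <;>
      · show M.setFlow (∅ : Set M.D) - M.setFlow (∅ : Set M.D) ∈ facialSubgroup M.σ M.α
        rw [sub_self]
        exact AddSubgroup.zero_mem _
    case pos =>
      obtain ⟨b0⟩ := hne
      set Lof : M.D → List M.D := fun d => Classical.choose (exists_link M b0 d) with hLofdef
      have hLof : ∀ d, Link M (Lof d) b0 d := fun d => Classical.choose_spec (exists_link M b0 d)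
      set φ : M.D → ZMod 3 := fun d => ((lcost M S (Lof d) : ℤ) : ZMod 3) with hφ
      have hφspec : ∀ (d : M.D) (L : List M.D), Link M L b0 d →
          φ d = ((lcost M S L : ℤ) : ZMod 3) := by
        intro d L hL
        have hclosed : Link M (Lof d ++ L.reverse.map M.α) b0 b0 :=
          link_append M (hLof d) (link_reverse M hL)
        have hdvd := closed_cost M S hyp _ _ hclosed
        rw [lcost_append, lcost_reverse, ← sub_eq_add_neg] at hdvd
        simp only [hφ]
        exact zmod3_of_dvd hdvd
      have hφface : ∀ d d', M.SameFace d d' → φ d = φ d' := by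
        intro d d' h
        calc φ d = ((lcost M S (Lof d) : ℤ) : ZMod 3) := hφspec d _ (hLof d)
          _ = φ d' := (hφspec d' (Lof d) (link_congr_right M h (hLof d))).symm
      have hφalpha : ∀ d, φ (M.α d) = φ d + ((M.setFlow S d : ℤ) : ZMod 3) := by
        intro d
        have hstep : Link M (Lof d ++ [d]) b0 (M.α d) :=
          link_append M (hLof d)
            ⟨Equiv.Perm.SameCycle.refl _ _, Equiv.Perm.SameCycle.refl _ _⟩
        rw [hφspec (M.α d) _ hstep, lcost_append, lcost_cons, lcost_nil,
          hφspec d _ (hLof d)]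
        push_cast
        ring
      have hj1 : ∀ j : ZMod 3, j ≠ j + 1 := by
        intro j h
        exact absurd (left_eq_add.mp h) (by decide)
      have hinj : ∀ x j : ZMod 3, (x + 1 = j + 1) ↔ x = j := by
        intro x j
        constructor
        · intro h
          exact add_right_cancel h
        · intro h
          rw [h]
      have main : ∀ j : ZMod 3,
          M.setFlow {d | d ∈ S ∧ φ d = j} - M.setFlow {d | d ∈ S ∧ φ d = j + 1}
            ∈ facialSubgroup M.σ M.α := by
        intro j
        have hmem := faceConst_mem M (fun d => if φ d = j + 1 then 0 else 1)
          (fun d d' h => by simp only [hφface d d' h])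
        have heq : M.setFlow {d | d ∈ S ∧ φ d = j} - M.setFlow {d | d ∈ S ∧ φ d = j + 1}
            = fun d => (if φ d = j + 1 then (0 : ℤ) else 1)
              - (if φ (M.α d) = j + 1 then 0 else 1) := by
          funext d
          simp only [Pi.sub_apply, CombMap.setFlow]
          by_cases hd : d ∈ S
          · have hα : M.α d ∉ S := hS d hd
            have hflow : M.setFlow S d = 1 := by
              rw [CombMap.setFlow, if_pos hd, if_neg hα]
              norm_num
            have hfa : φ (M.α d) = φ d + 1 := by
              rw [hφalpha d, hflow]
              push_cast
              ring
            have c2 : M.α d ∉ {x : M.D | x ∈ S ∧ φ x = j} := fun hh => hα hh.1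
            have c4 : M.α d ∉ {x : M.D | x ∈ S ∧ φ x = j + 1} := fun hh => hα hh.1
            rw [if_neg c2, if_neg c4]
            by_cases hx1 : φ d = j
            · have c1 : d ∈ {x : M.D | x ∈ S ∧ φ x = j} := ⟨hd, hx1⟩
              have c3 : d ∉ {x : M.D | x ∈ S ∧ φ x = j + 1} := fun hh =>
                hj1 j (hx1.symm.trans hh.2)
              have c5 : ¬ (φ d = j + 1) := fun hh => hj1 j (hx1.symm.trans hh)
              have c6 : φ (M.α d) = j + 1 := by rw [hfa, hx1]
              rw [if_pos c1, if_neg c3, if_neg c5, if_pos c6]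
              norm_num
            · by_cases hx2 : φ d = j + 1
              · have c1 : d ∉ {x : M.D | x ∈ S ∧ φ x = j} := fun hh => hx1 hh.2
                have c3 : d ∈ {x : M.D | x ∈ S ∧ φ x = j + 1} := ⟨hd, hx2⟩
                have c6 : ¬ (φ (M.α d) = j + 1) := fun hh =>
                  hx1 ((hinj (φ d) j).mp (hfa.symm.trans hh))
                rw [if_neg c1, if_pos c3, if_pos hx2, if_neg c6]
                norm_num
              · have c1 : d ∉ {x : M.D | x ∈ S ∧ φ x = j} := fun hh => hx1 hh.2
                have c3 : d ∉ {x : M.D | x ∈ S ∧ φ x = j + 1} := fun hh => hx2 hh.2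
                have c6 : ¬ (φ (M.α d) = j + 1) := fun hh =>
                  hx1 ((hinj (φ d) j).mp (hfa.symm.trans hh))
                rw [if_neg c1, if_neg c3, if_neg hx2, if_neg c6]
                norm_num
          · have c1 : d ∉ {x : M.D | x ∈ S ∧ φ x = j} := fun hh => hd hh.1
            have c3 : d ∉ {x : M.D | x ∈ S ∧ φ x = j + 1} := fun hh => hd hh.1
            rw [if_neg c1, if_neg c3]
            by_cases hα : M.α d ∈ S
            · have hflow : M.setFlow S d = -1 := by
                rw [CombMap.setFlow, if_neg hd, if_pos hα]
                ring
              have hfd : φ d = φ (M.α d) + 1 := by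
                rw [hφalpha d, hflow]
                push_cast
                ring
              by_cases hy1 : φ (M.α d) = j
              · have c2 : M.α d ∈ {x : M.D | x ∈ S ∧ φ x = j} := ⟨hα, hy1⟩
                have c4 : M.α d ∉ {x : M.D | x ∈ S ∧ φ x = j + 1} := fun hh =>
                  hj1 j (hy1.symm.trans hh.2)
                have c5 : φ d = j + 1 := by rw [hfd, hy1]
                have c6 : ¬ (φ (M.α d) = j + 1) := fun hh => hj1 j (hy1.symm.trans hh)
                rw [if_pos c2, if_neg c4, if_pos c5, if_neg c6]
                norm_num
              · have c5 : ¬ (φ d = j + 1) := fun hh =>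
                  hy1 ((hinj (φ (M.α d)) j).mp (hfd.symm.trans hh))
                by_cases hy2 : φ (M.α d) = j + 1
                · have c2 : M.α d ∉ {x : M.D | x ∈ S ∧ φ x = j} := fun hh => hy1 hh.2
                  have c4 : M.α d ∈ {x : M.D | x ∈ S ∧ φ x = j + 1} := ⟨hα, hy2⟩
                  rw [if_neg c2, if_pos c4, if_neg c5, if_pos hy2]
                  norm_num
                · have c2 : M.α d ∉ {x : M.D | x ∈ S ∧ φ x = j} := fun hh => hy1 hh.2
                  have c4 : M.α d ∉ {x : M.D | x ∈ S ∧ φ x = j + 1} := fun hh => hy2 hh.2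
                  rw [if_neg c2, if_neg c4, if_neg c5, if_neg hy2]
                  norm_num
            · have hflow : M.setFlow S d = 0 := by
                rw [CombMap.setFlow, if_neg hd, if_neg hα]
                ring
              have hfd : φ (M.α d) = φ d := by
                rw [hφalpha d, hflow]
                push_cast
                ring
              have c2 : M.α d ∉ {x : M.D | x ∈ S ∧ φ x = j} := fun hh => hα hh.1
              have c4 : M.α d ∉ {x : M.D | x ∈ S ∧ φ x = j + 1} := fun hh => hα hh.1
              rw [if_neg c2, if_neg c4]
              by_cases hz : φ d = j + 1
              · rw [if_pos hz, if_pos (hfd.trans hz)]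
                norm_num
              · rw [if_neg hz, if_neg (fun hh => hz (hfd.symm.trans hh))]
                norm_num
        rw [heq]
        exact hmem
      have m01 := main 0
      have m12 := main 1
      rw [show (0 : ZMod 3) + 1 = 1 from by decide] at m01
      rw [show (1 : ZMod 3) + 1 = 2 from by decide] at m12
      have m02 : M.setFlow {d | d ∈ S ∧ φ d = 0} - M.setFlow {d | d ∈ S ∧ φ d = 2}
          ∈ facialSubgroup M.σ M.α := by
        have := AddSubgroup.add_mem _ m01 m12
        rwa [sub_add_sub_cancel] at this
      refine ⟨{d | d ∈ S ∧ φ d = 0}, {d | d ∈ S ∧ φ d = 1}, {d | d ∈ S ∧ φ d = 2},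
        ?_, ?_, ?_, ?_, m01, m02, m12⟩
      · ext d
        simp only [Set.mem_union, Set.mem_setOf_eq]
        constructor
        · rintro ((⟨h, _⟩ | ⟨h, _⟩) | ⟨h, _⟩) <;> exact h
        · intro h
          rcases (by decide : ∀ x : ZMod 3, x = 0 ∨ x = 1 ∨ x = 2) (φ d) with h' | h' | h'
          · exact Or.inl (Or.inl ⟨h, h'⟩)
          · exact Or.inl (Or.inr ⟨h, h'⟩)
          · exact Or.inr ⟨h, h'⟩
      · rw [Set.disjoint_left]
        rintro d ⟨_, ha⟩ ⟨_, hb⟩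
        rw [ha] at hb
        exact absurd hb (by decide)
      · rw [Set.disjoint_left]
        rintro d ⟨_, ha⟩ ⟨_, hb⟩
        rw [ha] at hb
        exact absurd hb (by decide)
      · rw [Set.disjoint_left]
        rintro d ⟨_, ha⟩ ⟨_, hb⟩
        rw [ha] at hb
        exact absurd hb (by decide)

end Schnyder
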